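/- Let (A, C) be an observable pair with A ∈ ℝ^{n×n}, C ∈ ℝ^{p×n}. Then for any measurable set Ω ⊆ [0,T] (T > 0) with positive Lebesgue measure, the matrix ∫_Ω (e^{Aμ})ᵀ Cᵀ C e^{Aμ} dμ is positive definite. -/

import Mathlib

open Matrix MeasureTheory Set

section Aux

attribute [local instance] Matrix.linftyOpNormedRing Matrix.linftyOpNormedAlgebra

variable {n p : ℕ}

/-- auxiliary linear map `M ↦ B.mulVec (M.mulVec x)` -/
def auxL (B : Matrix (Fin p) (Fin n) ℝ) (x : Fin n → ℝ) :
    Matrix (Fin n) (Fin n) ℝ →ₗ[ℝ] (Fin p → ℝ) where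
  toFun M := B.mulVec (M.mulVec x)
  map_add' M N := by simp [Matrix.add_mulVec, Matrix.mulVec_add]
  map_smul' c M := by simp [Matrix.smul_mulVec, Matrix.mulVec_smul]

lemma auxL_hasDerivAt (A : Matrix (Fin n) (Fin n) ℝ) (B : Matrix (Fin p) (Fin n) ℝ)
    (x : Fin n → ℝ) (μ : ℝ) :
    HasDerivAt (fun t : ℝ => B.mulVec ((NormedSpace.exp (t • A)).mulVec x))
      ((B * A).mulVec ((NormedSpace.exp (μ • A)).mulVec x)) μ := by
  have h1 := hasDerivAt_exp_smul_const' (𝕂 := ℝ) A μ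
  have h2 := ((auxL B x).toContinuousLinearMap.hasFDerivAt
    (x := NormedSpace.exp (μ • A))).comp_hasDerivAt μ h1
  refine h2.congr_deriv ?_
  simp [auxL, Matrix.mulVec_mulVec, Matrix.mul_assoc]
  rfl

lemma auxAnalytic (A : Matrix (Fin n) (Fin n) ℝ) (C : Matrix (Fin p) (Fin n) ℝ)
    (x : Fin n → ℝ) (i : Fin p) (μ₀ : ℝ) :
    AnalyticAt ℝ (fun μ : ℝ => (C.mulVec ((NormedSpace.exp (μ • A)).mulVec x)) i) μ₀ := by
  have hexp : AnalyticAt ℝ (NormedSpace.exp) (μ₀ • A) :=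
    NormedSpace.analyticAt_exp_of_mem_ball _ (by
      rw [NormedSpace.expSeries_radius_eq_top (𝕂 := ℝ)]; exact edist_lt_top _ _)
  have hsm : AnalyticAt ℝ (fun μ : ℝ => μ • A) μ₀ := by
    have := (ContinuousLinearMap.smulRight (ContinuousLinearMap.id ℝ ℝ) A).analyticAt μ₀
    exact this
  have h1 : AnalyticAt ℝ ((NormedSpace.exp) ∘ fun μ : ℝ => μ • A) μ₀ := hexp.comp_of_eq hsm rfl
  have h2 : AnalyticAt ℝ ((((LinearMap.proj i).comp (auxL C x)).toContinuousLinearMap : Matrix (Fin n) (Fin n) ℝ → ℝ) ∘ ((NormedSpace.exp) ∘ fun μ : ℝ => μ • A)) μ₀ :=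
    (((LinearMap.proj i).comp (auxL C x)).toContinuousLinearMap.analyticAt
      (NormedSpace.exp (μ₀ • A))).comp_of_eq h1 rfl
  simpa [auxL, Function.comp_def] using h2

end Aux

lemma aux_pow_zero (A : Matrix (Fin n) (Fin n) ℝ) (C : Matrix (Fin p) (Fin n) ℝ)
    (x : Fin n → ℝ)
    (hzero : ∀ μ : ℝ, C.mulVec ((NormedSpace.exp (μ • A)).mulVec x) = 0) :
    ∀ k : ℕ, (C * A ^ k).mulVec x = 0 := by
  have key : ∀ k : ℕ, ∀ μ : ℝ, (C * A ^ k).mulVec ((NormedSpace.exp (μ • A)).mulVec x) = 0 := by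
    intro k
    induction k with
    | zero => simpa using hzero
    | succ k ih =>
      intro μ
      have h := auxL_hasDerivAt A (C * A ^ k) x μ
      have h0 : HasDerivAt (fun _ : ℝ => (0 : Fin p → ℝ))
          ((C * A ^ k * A).mulVec ((NormedSpace.exp (μ • A)).mulVec x)) μ :=
        h.congr_of_eventuallyEq (Filter.Eventually.of_forall fun t => (ih t).symm)
      have := h0.unique (hasDerivAt_const μ 0)
      rw [pow_succ, ← Matrix.mul_assoc]
      exact this
  intro k
  have := key k 0
  simpa [NormedSpace.exp_zero] using this

lemma aux_nontrivial (A : Matrix (Fin n) (Fin n) ℝ) (C : Matrix (Fin p) (Fin n) ℝ)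
    (hobs : (Matrix.of fun (q : Fin n × Fin p) (j : Fin n) =>
        (C * A ^ (q.1 : ℕ)) q.2 j).rank = n)
    (x : Fin n → ℝ) (hx : x ≠ 0) :
    ¬ ∀ μ : ℝ, C.mulVec ((NormedSpace.exp (μ • A)).mulVec x) = 0 := by
  intro hzero
  have hk := aux_pow_zero A C x hzero
  set M : Matrix (Fin n × Fin p) (Fin n) ℝ :=
    Matrix.of fun (q : Fin n × Fin p) (j : Fin n) => (C * A ^ (q.1 : ℕ)) q.2 j with hM
  have hMx : M.mulVecLin x = 0 := by
    funext q
    have := congrFun (hk q.1) q.2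
    simpa [M, Matrix.mulVecLin, Matrix.mulVec, dotProduct] using this
  have hker : x ∈ LinearMap.ker M.mulVecLin := hMx
  have hrange : Module.finrank ℝ (LinearMap.range M.mulVecLin) = n := hobs
  have hrn := LinearMap.finrank_range_add_finrank_ker M.mulVecLin
  have hdom : Module.finrank ℝ (Fin n → ℝ) = n := by simp
  have hker0 : Module.finrank ℝ (LinearMap.ker M.mulVecLin) = 0 := by omega
  have : LinearMap.ker M.mulVecLin = ⊥ := Submodule.finrank_eq_zero.mp hker0
  rw [this] at hker
  exact hx (by simpa using hker)

theorem stmt_11 (n p : ℕ) (A : Matrix (Fin n) (Fin n) ℝ) (C : Matrix (Fin p) (Fin n) ℝ)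
    (hobs : (Matrix.of fun (q : Fin n × Fin p) (j : Fin n) =>
        (C * A ^ (q.1 : ℕ)) q.2 j).rank = n)
    (T : ℝ) (hT : 0 < T) (Ω : Set ℝ) (hΩ : Ω ⊆ Set.Icc 0 T)
    (hmeas : MeasurableSet Ω) (hpos : 0 < volume Ω) :
    ∀ x : Fin n → ℝ, x ≠ 0 →
      0 < ∫ μ in Ω,
        (C.mulVec ((NormedSpace.exp (μ • A)).mulVec x)) ⬝ᵥ
          (C.mulVec ((NormedSpace.exp (μ • A)).mulVec x)) := by
  intro x hx
  set v : ℝ → Fin p → ℝ := fun μ => C.mulVec ((NormedSpace.exp (μ • A)).mulVec x) with hv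
  set f : ℝ → ℝ := fun μ => v μ ⬝ᵥ v μ with hf
  -- analyticity of f
  have hfa : ∀ μ₀ : ℝ, AnalyticAt ℝ f μ₀ := by
    intro μ₀
    have : AnalyticAt ℝ (fun μ => ∑ i : Fin p, v μ i * v μ i) μ₀ :=
      Finset.analyticAt_fun_sum Finset.univ fun i _ =>
        (auxAnalytic A C x i μ₀).mul (auxAnalytic A C x i μ₀)
    simpa [hf, dotProduct] using this
  have hfc : Continuous f := continuous_iff_continuousAt.mpr fun μ₀ => (hfa μ₀).continuousAt
  have hfnn : ∀ μ, 0 ≤ f μ :=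
    fun μ => Finset.sum_nonneg fun i _ => mul_self_nonneg _
  -- f is not identically zero
  have hnz : ¬ ∀ μ : ℝ, f μ = 0 := by
    intro h
    exact aux_nontrivial A C hobs x hx fun μ =>
      dotProduct_self_eq_zero.mp (h μ)
  -- zero set intersected with Icc is finite
  set Z : Set ℝ := {μ : ℝ | f μ = 0} with hZ
  set K : Set ℝ := Z ∩ Set.Icc 0 T with hK
  have hZc : IsClosed Z := isClosed_eq hfc continuous_const
  have hKcomp : IsCompact K :=
    isCompact_Icc.of_isClosed_subset (hZc.inter isClosed_Icc) inter_subset_right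
  have hKdisc : DiscreteTopology K := by
    rw [discreteTopology_subtype_iff]
    intro z hzK
    rcases (hfa z).eventually_eq_zero_or_eventually_ne_zero with hcase | hcase
    · exfalso
      apply hnz
      intro μ
      have han : AnalyticOnNhd ℝ f (Set.univ : Set ℝ) := fun w _ => hfa w
      have := han.eqOn_zero_of_preconnected_of_eventuallyEq_zero
        isPreconnected_univ (Set.mem_univ z) hcase
      exact this (Set.mem_univ μ)
    · rw [Filter.inf_principal_eq_bot]
      filter_upwards [hcase] with w hw
      intro hwK
      exact hw hwK.1
  have hKfin : K.Finite := hKcomp.finite (isDiscrete_iff_discreteTopology.mpr hKdisc)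
  have hKvol : volume K = 0 := hKfin.measure_zero _
  -- support of f covers most of Ω
  have hsub : Ω ⊆ (Function.support f ∩ Ω) ∪ K := by
    intro μ hμ
    by_cases h : f μ = 0
    · exact Or.inr ⟨h, hΩ hμ⟩
    · exact Or.inl ⟨h, hμ⟩
  have hsupvol : 0 < volume (Function.support f ∩ Ω) := by
    by_contra h
    push_neg at h
    have h0 : volume (Function.support f ∩ Ω) = 0 := le_antisymm h zero_le
    have : volume Ω ≤ volume ((Function.support f ∩ Ω) ∪ K) := measure_mono hsub
    have hle : volume ((Function.support f ∩ Ω) ∪ K) ≤ 0 := by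
      calc volume ((Function.support f ∩ Ω) ∪ K)
          ≤ volume (Function.support f ∩ Ω) + volume K := measure_union_le _ _
        _ = 0 := by rw [h0, hKvol, add_zero]
    exact absurd (le_trans ‹volume Ω ≤ _› hle) (by simpa using hpos.ne')
  -- integrability
  have hint : IntegrableOn f Ω := (hfc.integrableOn_Icc (a := 0) (b := T)).mono_set hΩ
  have := (setIntegral_pos_iff_support_of_nonneg_ae
    (Filter.Eventually.of_forall hfnn : 0 ≤ᵐ[volume.restrict Ω] f) hint).mpr hsupvol
  exact this
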